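/- Let h(x) = -x·log₂(x) - (1-x)·log₂(1-x) be the binary entropy function (with h(0)=h(1)=0). Then for all γ with 0 ≤ γ ≤ 1/2, 1 - 4γ² ≤ h(1/2 - γ) ≤ 1 - 2γ². -/

import Mathlib

noncomputable def binEnt (x : ℝ) : ℝ :=
  -(x * Real.logb 2 x) - (1 - x) * Real.logb 2 (1 - x)

open Real Set

noncomputable def Fent (t : ℝ) : ℝ := (1 + t) * Real.log (1 + t) + (1 - t) * Real.log (1 - t)

lemma Fent_cont : Continuous Fent := by
  have h := Real.continuous_mul_log
  have : Fent = fun t => (fun x => x * Real.log x) (1 + t) + (fun x => x * Real.log x) (1 - t) := by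
    ext t; simp [Fent]
  rw [this]
  exact (h.comp (by continuity)).add (h.comp (by continuity))

lemma hasDerivAt_Fent {t : ℝ} (ht : t ∈ Ioo (-1:ℝ) 1) :
    HasDerivAt Fent (Real.log (1 + t) - Real.log (1 - t)) t := by
  obtain ⟨h1, h2⟩ := ht
  have hp : (0:ℝ) < 1 + t := by linarith
  have hm : (0:ℝ) < 1 - t := by linarith
  have d1 : HasDerivAt (fun t : ℝ => 1 + t) 1 t := (hasDerivAt_id t).const_add 1
  have d2 : HasDerivAt (fun t : ℝ => 1 - t) (-1) t := (hasDerivAt_id t).const_sub 1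
  have l1 : HasDerivAt (fun t : ℝ => Real.log (1 + t)) (1 / (1 + t)) t := d1.log hp.ne'
  have l2 : HasDerivAt (fun t : ℝ => Real.log (1 - t)) (-1 / (1 - t)) t := d2.log hm.ne'
  have m1 := d1.mul l1
  have m2 := d2.mul l2
  have := m1.add m2
  refine this.congr_deriv ?_
  field_simp
  ring

lemma hasDerivAt_Fd {t : ℝ} (ht : t ∈ Ioo (-1:ℝ) 1) :
    HasDerivAt (fun t => Real.log (1 + t) - Real.log (1 - t)) (1 / (1 + t) + 1 / (1 - t)) t := by
  obtain ⟨h1, h2⟩ := ht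
  have hp : (0:ℝ) < 1 + t := by linarith
  have hm : (0:ℝ) < 1 - t := by linarith
  have d1 : HasDerivAt (fun t : ℝ => 1 + t) 1 t := (hasDerivAt_id t).const_add 1
  have d2 : HasDerivAt (fun t : ℝ => 1 - t) (-1) t := (hasDerivAt_id t).const_sub 1
  have l1 : HasDerivAt (fun t : ℝ => Real.log (1 + t)) (1 / (1 + t)) t := d1.log hp.ne'
  have l2 : HasDerivAt (fun t : ℝ => Real.log (1 - t)) (-1 / (1 - t)) t := d2.log hm.ne'
  have := l1.sub l2
  refine this.congr_deriv ?_
  field_simp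
  ring

lemma Fent_one : Fent 1 = 2 * Real.log 2 := by
  simp [Fent]
  ring

lemma two_div_one_sub_sq {x : ℝ} (h1 : -1 < x) (h2 : x < 1) :
    1 / (1 + x) + 1 / (1 - x) = 2 / (1 - x ^ 2) := by
  have hp : (0:ℝ) < 1 + x := by linarith
  have hm : (0:ℝ) < 1 - x := by linarith
  have hsq : (1:ℝ) - x ^ 2 ≠ 0 := by nlinarith
  field_simp
  ring

lemma Fent_lower : ∀ t ∈ Icc (0:ℝ) 1, Real.log 2 * t ^ 2 ≤ Fent t := by
  intro t ht
  rcases eq_or_lt_of_le ht.2 with rfl | ht1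
  · rw [Fent_one]
    nlinarith [Real.log_pos (by norm_num : (1:ℝ) < 2)]
  have hlog2 : Real.log 2 < 1 := by
    have := Real.log_two_lt_d9
    linarith
  -- K t = Fent t - log 2 * t^2 ; Kd its derivative
  set K : ℝ → ℝ := fun t => Fent t - Real.log 2 * t ^ 2 with hK
  set Kd : ℝ → ℝ := fun t => Real.log (1 + t) - Real.log (1 - t) - 2 * Real.log 2 * t with hKd
  have hKderiv : ∀ x ∈ Ioo (-1:ℝ) 1, HasDerivAt K (Kd x) x := by
    intro x hx
    have := (hasDerivAt_Fent hx).sub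
      (((hasDerivAt_pow 2 x).const_mul (Real.log 2)))
    refine this.congr_deriv ?_
    simp [hKd]; ring
  have hKdderiv : ∀ x ∈ Ioo (-1:ℝ) 1,
      HasDerivAt Kd (1 / (1 + x) + 1 / (1 - x) - 2 * Real.log 2) x := by
    intro x hx
    have := (hasDerivAt_Fd hx).sub ((hasDerivAt_id x).const_mul (2 * Real.log 2))
    refine this.congr_deriv ?_
    ring
  have hsub : Ico (0:ℝ) 1 ⊆ Ioo (-1:ℝ) 1 := fun x hx => ⟨by linarith [hx.1], hx.2⟩
  -- Kd is monotone on Ico 0 1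
  have hKdmono : MonotoneOn Kd (Ico (0:ℝ) 1) := by
    apply monotoneOn_of_deriv_nonneg (convex_Ico 0 1)
    · intro x hx
      exact (hKdderiv x (hsub hx)).continuousAt.continuousWithinAt
    · intro x hx
      rw [interior_Ico] at hx
      exact ((hKdderiv x (hsub (Ioo_subset_Ico_self hx))).differentiableAt).differentiableWithinAt
    · intro x hx
      rw [interior_Ico] at hx
      rw [(hKdderiv x (hsub (Ioo_subset_Ico_self hx))).deriv]
      have h1 : (0:ℝ) < 1 + x := by linarith [hx.1]
      have h2 : (0:ℝ) < 1 - x := by linarith [hx.2]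
      have hsq : (0:ℝ) < 1 - x ^ 2 := by nlinarith
      have e := two_div_one_sub_sq (by linarith [hx.1]) hx.2
      have h22 : (2:ℝ) ≤ 2 / (1 - x ^ 2) := by
        rw [le_div_iff₀ hsq]; nlinarith [sq_nonneg x]
      rw [e]
      linarith
  have hKd0 : Kd 0 = 0 := by simp [hKd]
  have hKdnonneg : ∀ x ∈ Ico (0:ℝ) 1, 0 ≤ Kd x := by
    intro x hx
    have := hKdmono ⟨le_refl 0, by norm_num⟩ hx hx.1
    rwa [hKd0] at this
  have hKmono : MonotoneOn K (Ico (0:ℝ) 1) := by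
    apply monotoneOn_of_deriv_nonneg (convex_Ico 0 1)
    · intro x hx
      exact (hKderiv x (hsub hx)).continuousAt.continuousWithinAt
    · intro x hx
      rw [interior_Ico] at hx
      exact ((hKderiv x (hsub (Ioo_subset_Ico_self hx))).differentiableAt).differentiableWithinAt
    · intro x hx
      rw [interior_Ico] at hx
      rw [(hKderiv x (hsub (Ioo_subset_Ico_self hx))).deriv]
      exact hKdnonneg x (Ioo_subset_Ico_self hx)
  have hK0 : K 0 = 0 := by simp [hK, Fent]
  have := hKmono ⟨le_refl 0, by norm_num⟩ ⟨ht.1, ht1⟩ ht.1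
  rw [hK0] at this
  simpa [hK] using this

lemma Fent_upper : ∀ t ∈ Icc (0:ℝ) 1, Fent t ≤ 2 * Real.log 2 * t ^ 2 := by
  have hlog2 : (0:ℝ) < Real.log 2 := Real.log_pos (by norm_num)
  have hlog2' : Real.log 2 < 1 := by have := Real.log_two_lt_d9; linarith
  have hlog2'' : (0.6931471803:ℝ) < Real.log 2 := Real.log_two_gt_d9
  set c : ℝ := 1 - 1 / (2 * Real.log 2) with hc
  have hc0 : 0 < c := by
    rw [hc, sub_pos, div_lt_one (by linarith)]; linarith
  have hc1 : c < 1 := by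
    have : 0 < 1 / (2 * Real.log 2) := by positivity
    rw [hc]; linarith
  set t₀ : ℝ := Real.sqrt c with ht₀def
  have ht₀sq : t₀ ^ 2 = c := Real.sq_sqrt hc0.le
  have ht₀0 : 0 < t₀ := Real.sqrt_pos.mpr hc0
  have ht₀1 : t₀ < 1 := by nlinarith [ht₀sq, Real.sqrt_nonneg c]
  set G : ℝ → ℝ := fun t => 2 * Real.log 2 * t ^ 2 - Fent t with hGdef
  set Gd : ℝ → ℝ := fun t =>
    4 * Real.log 2 * t - (Real.log (1 + t) - Real.log (1 - t)) with hGddef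
  have hGderiv : ∀ x ∈ Ioo (-1:ℝ) 1, HasDerivAt G (Gd x) x := by
    intro x hx
    have := ((hasDerivAt_pow 2 x).const_mul (2 * Real.log 2)).sub (hasDerivAt_Fent hx)
    refine this.congr_deriv ?_
    simp [hGddef]; ring
  have hGdderiv : ∀ x ∈ Ioo (-1:ℝ) 1,
      HasDerivAt Gd (4 * Real.log 2 - (1 / (1 + x) + 1 / (1 - x))) x := by
    intro x hx
    have := ((hasDerivAt_id x).const_mul (4 * Real.log 2)).sub (hasDerivAt_Fd hx)
    refine this.congr_deriv ?_
    ring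
  have hG1 : G 1 = 0 := by rw [hGdef]; simp [Fent_one]
  have hG0 : G 0 = 0 := by simp [hGdef, Fent]
  -- Part 1: G ≥ 0 on [0, t₀]
  have hsub1 : Icc (0:ℝ) t₀ ⊆ Ioo (-1:ℝ) 1 :=
    fun x hx => ⟨by linarith [hx.1], by linarith [hx.2]⟩
  have hGdmono : MonotoneOn Gd (Icc 0 t₀) := by
    apply monotoneOn_of_deriv_nonneg (convex_Icc 0 t₀)
    · intro x hx; exact (hGdderiv x (hsub1 hx)).continuousAt.continuousWithinAt
    · intro x hx
      rw [interior_Icc] at hx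
      exact ((hGdderiv x (hsub1 (Ioo_subset_Icc_self hx))).differentiableAt).differentiableWithinAt
    · intro x hx
      rw [interior_Icc] at hx
      rw [(hGdderiv x (hsub1 (Ioo_subset_Icc_self hx))).deriv]
      have h1 : (0:ℝ) < 1 + x := by linarith [hx.1]
      have h2 : (0:ℝ) < 1 - x := by linarith [hx.2, ht₀1]
      have hsq : (0:ℝ) < 1 - x ^ 2 := by nlinarith
      rw [two_div_one_sub_sq (by linarith) (by linarith), sub_nonneg, div_le_iff₀ hsq]
      have hx2 : x ^ 2 < c := by nlinarith [hx.2, hx.1, ht₀sq]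
      have hkey : 1 / (2 * Real.log 2) < 1 - x ^ 2 := by rw [hc] at hx2; linarith
      rw [div_lt_iff₀ (by linarith)] at hkey
      nlinarith
  have hGd0 : Gd 0 = 0 := by simp [hGddef]
  have hGdnonneg : ∀ x ∈ Icc (0:ℝ) t₀, 0 ≤ Gd x := by
    intro x hx
    have := hGdmono ⟨le_refl 0, ht₀0.le⟩ hx hx.1
    rwa [hGd0] at this
  have hGmono : MonotoneOn G (Icc 0 t₀) := by
    apply monotoneOn_of_deriv_nonneg (convex_Icc 0 t₀)
    · intro x hx; exact (hGderiv x (hsub1 hx)).continuousAt.continuousWithinAt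
    · intro x hx
      rw [interior_Icc] at hx
      exact ((hGderiv x (hsub1 (Ioo_subset_Icc_self hx))).differentiableAt).differentiableWithinAt
    · intro x hx
      rw [interior_Icc] at hx
      rw [(hGderiv x (hsub1 (Ioo_subset_Icc_self hx))).deriv]
      exact hGdnonneg x (Ioo_subset_Icc_self hx)
  have hGt₀ : 0 ≤ G t₀ := by
    have := hGmono ⟨le_refl 0, ht₀0.le⟩ ⟨ht₀0.le, le_refl t₀⟩ ht₀0.le
    rwa [hG0] at this
  -- Part 2: G concave on [t₀, 1]
  have hGcont : Continuous G :=
    (continuous_const.mul (continuous_pow 2)).sub Fent_cont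
  have hGconc : ConcaveOn ℝ (Icc t₀ 1) G := by
    refine (strictConcaveOn_of_deriv2_neg (convex_Icc t₀ 1) hGcont.continuousOn ?_).concaveOn
    intro x hx
    rw [interior_Icc] at hx
    have hx' : x ∈ Ioo (-1:ℝ) 1 := ⟨by linarith [hx.1, ht₀0], hx.2⟩
    have hev : deriv G =ᶠ[nhds x] Gd := by
      filter_upwards [isOpen_Ioo.mem_nhds hx'] with y hy
      exact (hGderiv y hy).deriv
    have h2 : deriv^[2] G x = deriv Gd x := by
      rw [show deriv^[2] G = deriv (deriv G) from rfl]
      exact Filter.EventuallyEq.deriv_eq hev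
    rw [h2, (hGdderiv x hx').deriv]
    have h1 : (0:ℝ) < 1 + x := by linarith [hx.1, ht₀0]
    have h2' : (0:ℝ) < 1 - x := by linarith [hx.2]
    have hsq : (0:ℝ) < 1 - x ^ 2 := by nlinarith
    rw [two_div_one_sub_sq (by linarith) hx.2, sub_neg, lt_div_iff₀ hsq]
    have hx2 : c < x ^ 2 := by nlinarith [hx.1, ht₀sq, ht₀0]
    have hkey : 1 - x ^ 2 < 1 / (2 * Real.log 2) := by rw [hc] at hx2; linarith
    rw [lt_div_iff₀ (by linarith)] at hkey
    nlinarith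
  -- Combine
  intro t ht
  rcases le_total t t₀ with hle | hge
  · have := hGmono ⟨le_refl 0, ht₀0.le⟩ ⟨ht.1, hle⟩ ht.1
    rw [hG0] at this
    simpa [hGdef] using this
  · set a : ℝ := (1 - t) / (1 - t₀) with ha
    set b : ℝ := (t - t₀) / (1 - t₀) with hb
    have hden : (0:ℝ) < 1 - t₀ := by linarith
    have ha0 : 0 ≤ a := div_nonneg (by linarith [ht.2]) hden.le
    have hb0 : 0 ≤ b := div_nonneg (by linarith) hden.le
    have hab : a + b = 1 := by rw [ha, hb]; field_simp; ring
    have hpt : a • t₀ + b • (1:ℝ) = t := by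
      simp only [smul_eq_mul, ha, hb]
      field_simp
      ring
    have := hGconc.ge_on_segment' (x := t₀) (y := 1)
      ⟨le_refl t₀, ht₀1.le⟩ ⟨ht₀1.le, le_refl 1⟩ ha0 hb0 hab
    rw [hpt, hG1] at this
    have h0G : 0 ≤ G t := le_trans (le_min hGt₀ (le_refl 0)) this
    simpa [hGdef] using h0G

theorem stmt_2 (γ : ℝ) (h0 : 0 ≤ γ) (h1 : γ ≤ 1 / 2) :
    1 - 4 * γ ^ 2 ≤ binEnt (1 / 2 - γ) ∧ binEnt (1 / 2 - γ) ≤ 1 - 2 * γ ^ 2 := by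
  rcases eq_or_lt_of_le h1 with rfl | hlt
  · norm_num [binEnt]
  have hlog2 : (0:ℝ) < Real.log 2 := Real.log_pos (by norm_num)
  have hx : (0:ℝ) < 1 / 2 - γ := by linarith
  have hx' : (0:ℝ) < 1 / 2 + γ := by linarith
  have h2γ : (0:ℝ) < 1 - 2 * γ := by linarith
  have h2γ' : (0:ℝ) < 1 + 2 * γ := by linarith
  have key : binEnt (1 / 2 - γ) = 1 - Fent (2 * γ) / (2 * Real.log 2) := by
    have e1 : Real.log (1 / 2 - γ) = Real.log (1 - 2 * γ) - Real.log 2 := by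
      rw [show (1:ℝ)/2 - γ = (1 - 2*γ)/2 by ring, Real.log_div h2γ.ne' (by norm_num)]
    have e2 : Real.log (1 - (1 / 2 - γ)) = Real.log (1 + 2 * γ) - Real.log 2 := by
      rw [show (1:ℝ) - (1/2 - γ) = (1 + 2*γ)/2 by ring, Real.log_div h2γ'.ne' (by norm_num)]
    simp only [binEnt, Real.logb, e1, e2, Fent]
    field_simp
    ring
  rw [key]
  constructor
  · have := Fent_upper (2 * γ) ⟨by linarith, by linarith⟩
    rw [sub_le_sub_iff_left, div_le_iff₀ (by linarith)]
    nlinarith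
  · have := Fent_lower (2 * γ) ⟨by linarith, by linarith⟩
    rw [sub_le_sub_iff_left, le_div_iff₀ (by linarith)]
    nlinarith
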